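/- Let l ≥ 5 be an odd integer and let L_l be the loop graph of length l. Then: (a) there exists a 2-coloring of L_l with no monochromatic cycle of length 3 (no monochromatic triangle); and (b) every 2-coloring c of L_l with no monochromatic triangle satisfies c (i,0) ≠ c (i,1) for every i in ZMod l, i.e., every juncture edge receives two different colors. -/
import Mathlib
open SimpleGraph

lemma triangle_isCycle' {V : Type*} {G : SimpleGraph V} {a b c : V}
    (h1 : G.Adj a b) (h2 : G.Adj b c) (h3 : G.Adj c a) :
    (Walk.cons h1 (Walk.cons h2 (Walk.cons h3 Walk.nil))).IsCycle := by
  have hab := h1.ne; have hbc := h2.ne; have hca := h3.ne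
  simp_all [Walk.isCycle_def, Walk.isTrail_def, Sym2.eq_iff]
  tauto

lemma zmod_tri' {l : ℕ} (hl : 5 ≤ l) {i j k : ZMod l}
    (e1 : i = j ∨ j = i + 1 ∨ i = j + 1)
    (e2 : j = k ∨ k = j + 1 ∨ j = k + 1)
    (e3 : i = k ∨ k = i + 1 ∨ i = k + 1) :
    i = j ∨ j = k ∨ i = k := by
  have h1 : (1 : ZMod l) ≠ 0 := by
    intro h
    have := Nat.le_of_dvd one_pos ((ZMod.natCast_eq_zero_iff 1 l).mp (by exact_mod_cast h))
    omega
  have h2 : (2 : ZMod l) ≠ 0 := by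
    intro h
    have := Nat.le_of_dvd two_pos ((ZMod.natCast_eq_zero_iff 2 l).mp (by exact_mod_cast h))
    omega
  have h3 : (3 : ZMod l) ≠ 0 := by
    intro h
    have := Nat.le_of_dvd three_pos ((ZMod.natCast_eq_zero_iff 3 l).mp (by exact_mod_cast h))
    omega
  by_contra hc
  push_neg at hc
  obtain ⟨hij, hjk, hik⟩ := hc
  rcases e1 with e1 | e1 | e1
  · exact hij e1
  · rcases e2 with e2 | e2 | e2
    · exact hjk e2
    · rcases e3 with e3 | e3 | e3
      · exact hik e3
      · exact h1 (by linear_combination e3 - e1 - e2)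
      · exact h3 (by linear_combination -e1 - e2 - e3)
    · rcases e3 with e3 | e3 | e3
      · exact hik e3
      · exact h1 (by linear_combination e1 - e2 - e3)
      · exact hik (by linear_combination e2 - e1)
  · rcases e2 with e2 | e2 | e2
    · exact hjk e2
    · exact hik (by linear_combination e1 - e2)
    · rcases e3 with e3 | e3 | e3
      · exact hik e3
      · exact h3 (by linear_combination -e1 - e2 - e3)
      · exact h1 (by linear_combination e3 - e1 - e2)



/-- `c` is a 2-coloring of `G` with no monochromatic cycle of length `k`. -/
def NoMonoCycle {V : Type*} (G : SimpleGraph V) (k : ℕ) (c : V → Bool) : Prop :=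
  ∀ ⦃v : V⦄ (w : G.Walk v v), w.IsCycle → w.length = k →
    ¬ (∀ u ∈ w.support, c u = c v)

/-- The loop graph `L_l`: vertices `(ZMod l) × Fin 2`, two distinct vertices
`(i,a)` and `(j,b)` are adjacent iff `i = j`, `j = i + 1` or `i = j + 1`. -/
def loopGraph (l : ℕ) : SimpleGraph (ZMod l × Fin 2) :=
  SimpleGraph.fromRel (fun u v => u.1 = v.1 ∨ v.1 = u.1 + 1 ∨ u.1 = v.1 + 1)

lemma adj_rel' {l : ℕ} {u v : ZMod l × Fin 2} (h : (loopGraph l).Adj u v) :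
    u ≠ v ∧ (u.1 = v.1 ∨ v.1 = u.1 + 1 ∨ u.1 = v.1 + 1) := by
  simp only [loopGraph, fromRel_adj] at h
  tauto

lemma adj_of' {l : ℕ} {u v : ZMod l × Fin 2} (h : u ≠ v)
    (hr : u.1 = v.1 ∨ v.1 = u.1 + 1 ∨ u.1 = v.1 + 1) : (loopGraph l).Adj u v := by
  simp only [loopGraph, fromRel_adj]
  tauto

theorem stmt6 (l : ℕ) (hl : 5 ≤ l) (hodd : Odd l) :
    (∃ c : ZMod l × Fin 2 → Bool, NoMonoCycle (loopGraph l) 3 c) ∧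
    (∀ c : ZMod l × Fin 2 → Bool, NoMonoCycle (loopGraph l) 3 c →
      ∀ i : ZMod l, c (i, 0) ≠ c (i, 1)) := by
  have hone : (1 : ZMod l) ≠ 0 := by
    intro h
    have := Nat.le_of_dvd one_pos ((ZMod.natCast_eq_zero_iff 1 l).mp (by exact_mod_cast h))
    omega
  have keypair : ∀ (p q : ZMod l × Fin 2), p ≠ q → p.1 = q.1 →
      decide (p.2 = 0) ≠ decide (q.2 = 0) := by
    rintro ⟨p1, p2⟩ ⟨q1, q2⟩ hne hf
    simp only at hf
    subst hf
    have h2 : p2 ≠ q2 := fun h => hne (by rw [h])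
    fin_cases p2 <;> fin_cases q2 <;> simp_all
  constructor
  · refine ⟨fun p => decide (p.2 = 0), ?_⟩
    intro v w hcyc hlen hmono
    cases w with
    | nil => simp at hlen
    | cons h1 p =>
      cases p with
      | nil => simp at hlen
      | cons h2 q =>
        cases q with
        | nil => simp at hlen
        | cons h3 r =>
          cases r with
          | cons h4 s => simp [Walk.length_cons] at hlen
          | nil =>
            rename_i x y
            have r1 := adj_rel' h1
            have r2 := adj_rel' h2
            have r3 := adj_rel' h3.symm
            have hx : decide (x.2 = 0) = decide (v.2 = 0) := hmono x (by simp)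
            have hy : decide (y.2 = 0) = decide (v.2 = 0) := hmono y (by simp)
            rcases zmod_tri' hl r1.2 r2.2 r3.2 with h | h | h
            · exact keypair v x r1.1 h hx.symm
            · exact keypair x y r2.1 h (hx.trans hy.symm)
            · exact keypair v y r3.1 h hy.symm
  · intro c H i hcc
    have prop : ∀ j : ZMod l, c (j, 0) = c (j, 1) →
        c (j + 1, 0) = !c (j, 0) ∧ c (j + 1, 1) = !c (j, 0) := by
      intro j hj
      have hnj : j ≠ j + 1 := by
        intro h
        exact hone (by linear_combination -h)
      have key : ∀ a : Fin 2, c (j + 1, a) = !c (j, 0) := by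
        intro a
        have h01 : (loopGraph l).Adj (j, 0) (j, 1) := by
          apply adj_of' (fun h => Fin.zero_ne_one (congrArg Prod.snd h)) (by left; rfl)
        have h1a : (loopGraph l).Adj (j, 1) (j + 1, a) := by
          apply adj_of' (fun h => hnj (congrArg Prod.fst h)) (by right; left; rfl)
        have ha0 : (loopGraph l).Adj (j + 1, a) (j, 0) := by
          apply adj_of' (fun h => hnj (congrArg Prod.fst h).symm) (by right; right; rfl)
        have hmc := H (Walk.cons h01 (Walk.cons h1a (Walk.cons ha0 Walk.nil)))
          (triangle_isCycle' h01 h1a ha0) rfl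
        push_neg at hmc
        obtain ⟨u, hu, hune⟩ := hmc
        simp [Walk.support_cons] at hu
        rcases hu with h | h | h | h
        · exact absurd (by rw [h]) hune
        · exact absurd (by rw [h, ← hj]) hune
        · rw [h] at hune
          cases hb : c (j + 1, a) <;> cases hb' : c (j, 0) <;> simp_all
        · exact absurd (by rw [h]) hune
      exact ⟨key 0, key 1⟩
    have main : ∀ k : ℕ, c (i + (k : ZMod l), 0) = c (i + (k : ZMod l), 1) ∧
        c (i + (k : ZMod l), 0) = ((decide (k % 2 = 1)).xor (c (i, 0))) := by
      intro k
      induction k with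
      | zero => simpa using hcc
      | succ n ih =>
        have hp := prop (i + (n : ZMod l)) ih.1
        have hcast : ((n + 1 : ℕ) : ZMod l) = (n : ZMod l) + 1 := by push_cast; ring
        have hadd : i + ((n + 1 : ℕ) : ZMod l) = (i + (n : ZMod l)) + 1 := by
          rw [hcast]; ring
        rw [hadd]
        refine ⟨hp.1.trans hp.2.symm, ?_⟩
        rw [hp.1, ih.2]
        obtain h | h : n % 2 = 0 ∨ n % 2 = 1 := by omega
        · have : (n + 1) % 2 = 1 := by omega
          simp [h, this]
        · have : (n + 1) % 2 = 0 := by omega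
          simp [h, this]
    have hl2 : l % 2 = 1 := Nat.odd_iff.mp hodd
    have := (main l).2
    rw [ZMod.natCast_self, add_zero, hl2] at this
    simp at this
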